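/- Assume condition (exp). Then for every fixed integer l ≥ 3, ρ_l(n) ≍ n^{(r+l)/(r+1)}, i.e. there are constants C_1, C_2 > 0 and N (possibly depending on l) such that C_1 n^{(r+l)/(r+1)} ≤ ρ_l(n) ≤ C_2 n^{(r+l)/(r+1)} for all n ≥ N. -/

import Mathlib

open Finset Filter

/-- The number of multisets of total size `n` determined by the parameters `a j`
(the number of one-component multisets of size `j`), i.e.
`c_n = Σ_{η ∈ Ω_n} Π_{j=1}^n C(a_j + η_j - 1, η_j)` where
`Ω_n = {η : Σ_{j=1}^n j·η_j = n}` (indices shifted: `j ∈ Fin n` stands for `j+1`). -/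
def multisetCount (a : ℕ → ℕ) (n : ℕ) : ℕ :=
  ∑ η : Fin n → Fin (n + 1),
    if ∑ j : Fin n, (j.1 + 1) * (η j).1 = n then
      ∏ j : Fin n, Nat.choose (a (j.1 + 1) + (η j).1 - 1) (η j).1
    else 0

/-- `M_n(σ) = Σ_{j=1}^n j a_j e^{-jσ}/(1-e^{-jσ})`. -/
noncomputable def Mfun (a : ℕ → ℕ) (n : ℕ) (σ : ℝ) : ℝ :=
  ∑ j ∈ Finset.Icc 1 n, (j : ℝ) * (a j) * Real.exp (-(j * σ)) / (1 - Real.exp (-(j * σ)))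

/-- `ρ_l(n, σ) = Σ_{j=1}^n j^l a_j Σ_{k≥1} k^{l-1} e^{-jkσ}`. -/
noncomputable def rho (a : ℕ → ℕ) (l n : ℕ) (σ : ℝ) : ℝ :=
  ∑ j ∈ Finset.Icc 1 n, (j : ℝ) ^ l * (a j) *
    ∑' k : ℕ, ((k : ℝ) + 1) ^ (l - 1) * Real.exp (-((j : ℝ) * ((k : ℝ) + 1) * σ))

/-- Condition (exp): `a_j ≍ j^{r-1} y^j`, i.e. there are constants `D₁, D₂ > 0` with
`D₁ j^{r-1} y^j ≤ a_j ≤ D₂ j^{r-1} y^j` for all `j ≥ 1`. -/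
def ExpansiveCond (a : ℕ → ℕ) (r y : ℝ) : Prop :=
  ∃ D₁ D₂ : ℝ, 0 < D₁ ∧ 0 < D₂ ∧ ∀ j : ℕ, 1 ≤ j →
    D₁ * (j : ℝ) ^ (r - 1) * y ^ j ≤ (a j : ℝ) ∧ (a j : ℝ) ≤ D₂ * (j : ℝ) ^ (r - 1) * y ^ j

lemma auxA (c : ℝ) (hc : 0 ≤ c) : ∃ A : ℝ, 0 < A ∧ ∀ u : ℝ, 0 < u → u ^ c * Real.exp (-u) ≤ A := by
  rcases eq_or_lt_of_le hc with h | h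
  · refine ⟨1, one_pos, fun u hu => ?_⟩
    rw [← h, Real.rpow_zero, one_mul]
    exact Real.exp_le_one_iff.2 (by linarith)
  · refine ⟨Real.exp (c * (Real.log c - 1)), Real.exp_pos _, fun u hu => ?_⟩
    rw [Real.rpow_def_of_pos hu, ← Real.exp_add]
    apply Real.exp_le_exp.2
    have h1 : Real.log (u / c) ≤ u / c - 1 := Real.log_le_sub_one_of_pos (by positivity)
    rw [Real.log_div (ne_of_gt hu) (ne_of_gt h)] at h1
    have h3 : Real.log u * c ≤ (u / c - 1 + Real.log c) * c :=
      mul_le_mul_of_nonneg_right (by linarith) hc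
    have h4 : (u / c - 1 + Real.log c) * c = u - c + Real.log c * c := by
      field_simp
    nlinarith [h3]

lemma tsum_shift_geom (x : ℝ) (h0 : 0 ≤ x) (h1 : x < 1) :
    ∑' k : ℕ, x ^ (k + 1) = x / (1 - x) := by
  have : ∀ k : ℕ, x ^ (k+1) = x * x ^ k := fun k => by ring
  simp_rw [this]
  rw [tsum_mul_left, tsum_geometric_of_lt_one h0 h1, div_eq_mul_inv]

lemma summable_shift_geom (x : ℝ) (h0 : 0 ≤ x) (h1 : x < 1) :
    Summable (fun k : ℕ => x ^ (k + 1)) := by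
  have : ∀ k : ℕ, x ^ (k+1) = x * x ^ k := fun k => by ring
  simp_rw [this]
  exact (summable_geometric_of_lt_one h0 h1).mul_left x

lemma sum_pow_le_tsum (x : ℝ) (h0 : 0 ≤ x) (h1 : x < 1) (n : ℕ) :
    ∑ j ∈ Finset.Icc 1 n, x ^ j ≤ x / (1 - x) := by
  rw [show Finset.Icc 1 n = Finset.Ico 1 (n+1) by rfl, Finset.sum_Ico_eq_sum_range]
  rw [← tsum_shift_geom x h0 h1]
  have h2 : ∀ i : ℕ, x ^ (1 + i) = x ^ (i + 1) := fun i => by rw [add_comm]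
  simp_rw [h2]
  exact Summable.sum_le_tsum _ (fun i _ => by positivity) (summable_shift_geom x h0 h1)

lemma exp_ratio_le (t : ℝ) (ht : 0 < t) :
    Real.exp (-t) / (1 - Real.exp (-t)) ≤ 1 / t := by
  have h1 : Real.exp (-t) < 1 := Real.exp_lt_one_iff.2 (by linarith)
  have h4 : (0:ℝ) < Real.exp t := Real.exp_pos t
  have h5 : Real.exp (-t) * Real.exp t = 1 := by rw [← Real.exp_add]; simp
  rw [div_le_div_iff₀ (by linarith) ht]
  nlinarith [Real.add_one_le_exp t, (Real.exp_pos (-t)).le]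

lemma sum_exp_le (t : ℝ) (ht : 0 < t) (n : ℕ) :
    ∑ j ∈ Finset.Icc 1 n, Real.exp (-(j * t)) ≤ 1 / t := by
  have hx0 : (0:ℝ) ≤ Real.exp (-t) := (Real.exp_pos _).le
  have hx1 : Real.exp (-t) < 1 := Real.exp_lt_one_iff.2 (by linarith)
  have heq : ∀ j : ℕ, Real.exp (-((j:ℝ) * t)) = Real.exp (-t) ^ j := fun j => by
    rw [← Real.exp_nat_mul]; ring_nf
  calc ∑ j ∈ Finset.Icc 1 n, Real.exp (-((j:ℝ) * t))
      = ∑ j ∈ Finset.Icc 1 n, Real.exp (-t) ^ j :=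
        Finset.sum_congr rfl fun j _ => heq j
    _ ≤ Real.exp (-t) / (1 - Real.exp (-t)) := sum_pow_le_tsum _ hx0 hx1 n
    _ ≤ 1 / t := exp_ratio_le t ht

lemma sum_rpow_exp_le (s : ℝ) (hs : 1 ≤ s) : ∃ C : ℝ, 0 < C ∧ ∀ t : ℝ, 0 < t → ∀ n : ℕ,
    ∑ j ∈ Finset.Icc 1 n, (j:ℝ) ^ (s - 1) * Real.exp (-(j * t)) ≤ C * t ^ (-s) := by
  obtain ⟨A, hA, hAle⟩ := auxA (s-1) (by linarith)
  refine ⟨A * 2 ^ s, by positivity, fun t ht n => ?_⟩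
  have key : ∀ j ∈ Finset.Icc 1 n, (j:ℝ) ^ (s - 1) * Real.exp (-(j * t))
      ≤ A * (2/t) ^ (s-1) * Real.exp (-(j * (t/2))) := by
    intro j hj
    have hj1 : 1 ≤ j := (Finset.mem_Icc.1 hj).1
    have hjpos : (0:ℝ) < j := by exact_mod_cast Nat.pos_of_ne_zero (by omega)
    have hu : (0:ℝ) < (j:ℝ) * (t/2) := by positivity
    have e1 : (j:ℝ) ^ (s-1) = ((j:ℝ) * (t/2)) ^ (s-1) * (2/t) ^ (s-1) := by
      rw [← Real.mul_rpow (by positivity) (by positivity)]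
      congr 1
      field_simp
    have e2 : Real.exp (-((j:ℝ) * t)) = Real.exp (-((j:ℝ) * (t/2))) * Real.exp (-((j:ℝ) * (t/2))) := by
      rw [← Real.exp_add]; ring_nf
    rw [e1, e2]
    have h3 := hAle _ hu
    calc ((j:ℝ) * (t/2)) ^ (s-1) * (2/t) ^ (s-1) * (Real.exp (-((j:ℝ) * (t/2))) * Real.exp (-((j:ℝ) * (t/2))))
        = (((j:ℝ) * (t/2)) ^ (s-1) * Real.exp (-((j:ℝ) * (t/2)))) * ((2/t) ^ (s-1) * Real.exp (-((j:ℝ) * (t/2)))) := by ring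
      _ ≤ A * ((2/t) ^ (s-1) * Real.exp (-((j:ℝ) * (t/2)))) := by
          apply mul_le_mul_of_nonneg_right h3 (by positivity)
      _ = A * (2/t) ^ (s-1) * Real.exp (-((j:ℝ) * (t/2))) := by ring
  calc ∑ j ∈ Finset.Icc 1 n, (j:ℝ) ^ (s - 1) * Real.exp (-(j * t))
      ≤ ∑ j ∈ Finset.Icc 1 n, A * (2/t) ^ (s-1) * Real.exp (-(j * (t/2))) :=
        Finset.sum_le_sum key
    _ = A * (2/t) ^ (s-1) * ∑ j ∈ Finset.Icc 1 n, Real.exp (-(j * (t/2))) := by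
        rw [Finset.mul_sum]
    _ ≤ A * (2/t) ^ (s-1) * (1/(t/2)) := by
        apply mul_le_mul_of_nonneg_left (sum_exp_le (t/2) (by linarith) n) (by positivity)
    _ = A * (2/t) ^ s := by
        rw [show s = s - 1 + 1 by ring, Real.rpow_add_one (by positivity : (2/t) ≠ 0)]
        ring_nf
    _ = A * 2 ^ s * t ^ (-s) := by
        rw [Real.div_rpow (by norm_num) ht.le, Real.rpow_neg ht.le, div_eq_mul_inv]
        ring

lemma sum_rpow_exp_ge (s : ℝ) (hs : 1 ≤ s) : ∃ c : ℝ, 0 < c ∧ ∀ t : ℝ, 0 < t → t ≤ 1/4 →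
    ∀ n : ℕ, 1/t ≤ (n:ℝ) →
    c * t ^ (-s) ≤ ∑ j ∈ Finset.Icc 1 n, (j:ℝ) ^ (s - 1) * Real.exp (-(j * t)) := by
  refine ⟨2 ^ (1-s) * Real.exp (-1) / 4, by positivity, fun t ht ht4 n hn => ?_⟩
  set J₁ := ⌈1/(2*t)⌉₊ with hJ₁
  set J₂ := ⌊1/t⌋₊ with hJ₂
  have h2t : (2:ℝ) ≤ 1/(2*t) := by
    rw [le_div_iff₀ (by linarith)]; linarith
  have hc1 : (J₁:ℝ) ≤ 1/(2*t) + 1 := (Nat.ceil_lt_add_one (by linarith)).le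
  have hc2 : 1/(2*t) ≤ (J₁:ℝ) := Nat.le_ceil _
  have hf1 : 1/t - 1 ≤ (J₂:ℝ) := (Nat.sub_one_lt_floor _).le
  have hf2 : (J₂:ℝ) ≤ 1/t := Nat.floor_le (by positivity)
  have htt : 1/(2*t) + 1 ≤ 1/t - 1 := by
    have h : 1/t = 2 * (1/(2*t)) := by field_simp
    linarith
  have hJle : J₁ ≤ J₂ := by exact_mod_cast (hc1.trans htt).trans hf1
  have hJ1pos : 1 ≤ J₁ := by
    have : (1:ℝ) ≤ (J₁:ℝ) := by linarith
    exact_mod_cast this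
  have hJ2n : J₂ ≤ n := by exact_mod_cast hf2.trans hn
  have hsub : Finset.Icc J₁ J₂ ⊆ Finset.Icc 1 n := by
    apply Finset.Icc_subset_Icc hJ1pos hJ2n
  have hterm : ∀ j ∈ Finset.Icc J₁ J₂,
      (1/(2*t)) ^ (s-1) * Real.exp (-1) ≤ (j:ℝ) ^ (s - 1) * Real.exp (-(j * t)) := by
    intro j hj
    obtain ⟨hj1, hj2⟩ := Finset.mem_Icc.1 hj
    have hjlb : 1/(2*t) ≤ (j:ℝ) := hc2.trans (by exact_mod_cast hj1)
    have hjub : (j:ℝ) ≤ 1/t := (by exact_mod_cast hj2 : (j:ℝ) ≤ (J₂:ℝ)).trans hf2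
    have h1 : (1/(2*t)) ^ (s-1) ≤ (j:ℝ) ^ (s-1) :=
      Real.rpow_le_rpow (by positivity) hjlb (by linarith)
    have h2 : Real.exp (-1) ≤ Real.exp (-((j:ℝ)*t)) := by
      apply Real.exp_le_exp.2
      have : (j:ℝ) * t ≤ 1 := by
        rw [← le_div_iff₀ ht]; exact hjub
      linarith
    exact mul_le_mul h1 h2 (Real.exp_pos _).le (by positivity)
  have hcard : (1/(4*t)) ≤ ((Finset.Icc J₁ J₂).card : ℝ) := by
    rw [Nat.card_Icc]
    have : ((J₂ + 1 - J₁ : ℕ) : ℝ) = (J₂:ℝ) + 1 - (J₁:ℝ) := by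
      have : J₁ ≤ J₂ + 1 := by omega
      push_cast [this]; ring
    rw [this]
    have h4 : 1/(4*t) ≤ 1/(2*t) - 1 := by
      have : 1/(2*t) = 2 * (1/(4*t)) := by field_simp; ring
      have h4t : (1:ℝ) ≤ 1/(4*t) := by
        rw [le_div_iff₀ (by linarith)]; linarith
      linarith [this]
    have hhalf : 1/t = 2 * (1/(2*t)) := by field_simp
    linarith
  calc (2:ℝ) ^ (1-s) * Real.exp (-1) / 4 * t ^ (-s)
      = (1/(4*t)) * ((1/(2*t)) ^ (s-1) * Real.exp (-1)) := by
        have e1 : (1/(2*t)) ^ (s-1) = 2^(1-s) * t^(1-s) := by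
          rw [show (1:ℝ)/(2*t) = (2*t)⁻¹ by ring, ← Real.rpow_neg_one (2*t),
            ← Real.rpow_mul (by positivity), show (-1:ℝ)*(s-1) = 1-s by ring,
            Real.mul_rpow (by norm_num) ht.le]
        have e2 : t^(1-s) = t * t^(-s) := by
          rw [show (1:ℝ)-s = 1 + -s by ring, Real.rpow_add ht, Real.rpow_one]
        rw [e1, e2]
        field_simp
    _ ≤ ((Finset.Icc J₁ J₂).card : ℝ) * ((1/(2*t)) ^ (s-1) * Real.exp (-1)) := by
        apply mul_le_mul_of_nonneg_right hcard (by positivity)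
    _ = ∑ _j ∈ Finset.Icc J₁ J₂, (1/(2*t)) ^ (s-1) * Real.exp (-1) := by
        rw [Finset.sum_const, nsmul_eq_mul]
    _ ≤ ∑ j ∈ Finset.Icc J₁ J₂, (j:ℝ) ^ (s - 1) * Real.exp (-(j * t)) :=
        Finset.sum_le_sum hterm
    _ ≤ ∑ j ∈ Finset.Icc 1 n, (j:ℝ) ^ (s - 1) * Real.exp (-(j * t)) := by
        apply Finset.sum_le_sum_of_subset_of_nonneg hsub
        intro i _ _; positivity

lemma summable_shift (p : ℝ) (hp : p < -1) : Summable (fun k : ℕ => ((k:ℝ)+1) ^ p) := by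
  have h := Real.summable_nat_rpow.2 hp
  have h2 := (summable_nat_add_iff (f := fun n : ℕ => (n:ℝ) ^ p) 1).2 h
  convert h2 using 2 with k
  push_cast
  rfl
  push_cast
  ring_nf

lemma summable_ksum (m : ℕ) (u : ℝ) (hu : 0 < u) :
    Summable (fun k : ℕ => ((k:ℝ)+1)^m * Real.exp (-(((k:ℝ)+1) * u))) := by
  obtain ⟨A, hA, hAle⟩ := auxA (m:ℝ) (by positivity)
  apply Summable.of_nonneg_of_le
    (f := fun k : ℕ => (A * (2/u)^(m:ℝ)) * (Real.exp (-(u/2)))^k)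
    (fun k => by positivity)
  · intro k
    have hk1 : (0:ℝ) < (k:ℝ)+1 := by positivity
    have hv : (0:ℝ) < ((k:ℝ)+1) * (u/2) := by positivity
    have e2 : Real.exp (-(((k:ℝ)+1) * u)) = Real.exp (-(((k:ℝ)+1) * (u/2))) * Real.exp (-(((k:ℝ)+1) * (u/2))) := by
      rw [← Real.exp_add]; ring_nf
    have e1 : ((k:ℝ)+1)^m = (((k:ℝ)+1) * (u/2)) ^ (m:ℝ) * (2/u) ^ (m:ℝ) := by
      rw [← Real.mul_rpow (by positivity) (by positivity), ← Real.rpow_natCast ((k:ℝ)+1) m]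
      congr 1
      field_simp
    rw [e1, e2]
    have h3 := hAle _ hv
    have h4 : Real.exp (-(((k:ℝ)+1) * (u/2))) ≤ Real.exp (-((k:ℝ) * (u/2))) := by
      apply Real.exp_le_exp.2; nlinarith
    have h5 : Real.exp (-((k:ℝ) * (u/2))) = (Real.exp (-(u/2)))^k := by
      rw [← Real.exp_nat_mul]; ring_nf
    calc (((k:ℝ)+1) * (u/2)) ^ (m:ℝ) * (2/u) ^ (m:ℝ) * (Real.exp (-(((k:ℝ)+1) * (u/2))) * Real.exp (-(((k:ℝ)+1) * (u/2))))
        = ((((k:ℝ)+1) * (u/2)) ^ (m:ℝ) * Real.exp (-(((k:ℝ)+1) * (u/2)))) * ((2/u) ^ (m:ℝ) * Real.exp (-(((k:ℝ)+1) * (u/2)))) := by ring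
      _ ≤ A * ((2/u) ^ (m:ℝ) * Real.exp (-(((k:ℝ)+1) * (u/2)))) :=
          mul_le_mul_of_nonneg_right h3 (by positivity)
      _ ≤ A * ((2/u) ^ (m:ℝ) * (Real.exp (-(u/2)))^k) := by
          apply mul_le_mul_of_nonneg_left _ hA.le
          apply mul_le_mul_of_nonneg_left _ (by positivity)
          rw [← h5]; exact h4
      _ = (A * (2/u)^(m:ℝ)) * (Real.exp (-(u/2)))^k := by ring
  · apply Summable.mul_left
    exact summable_geometric_of_lt_one (Real.exp_pos _).le (Real.exp_lt_one_iff.2 (by linarith))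

lemma double_sum_le (m : ℕ) (s : ℝ) (hs : 1 ≤ s) (hms : (m:ℝ) + 1 < s) :
    ∃ C : ℝ, 0 < C ∧ ∀ t : ℝ, 0 < t → ∀ n : ℕ,
      ∑ j ∈ Finset.Icc 1 n, (j:ℝ)^(s-1) *
        ∑' k : ℕ, ((k:ℝ)+1)^m * Real.exp (-((j:ℝ)*((k:ℝ)+1)*t)) ≤ C * t^(-s) := by
  obtain ⟨C₀, hC₀, hC₀le⟩ := sum_rpow_exp_le s hs
  have hp : (m:ℝ) - s < -1 := by linarith
  set Z := ∑' k : ℕ, ((k:ℝ)+1)^((m:ℝ)-s) with hZdef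
  have hZ0 : 0 ≤ Z := tsum_nonneg (fun k => by positivity)
  refine ⟨C₀ * (Z + 1), by positivity, fun t ht n => ?_⟩
  have hsumF : ∀ j : ℕ, j ∈ Finset.Icc 1 n → Summable
      (fun k : ℕ => (j:ℝ)^(s-1) * (((k:ℝ)+1)^m * Real.exp (-((j:ℝ)*((k:ℝ)+1)*t)))) := by
    intro j hj
    have hj1 : 1 ≤ j := (Finset.mem_Icc.1 hj).1
    have hjpos : (0:ℝ) < j := by exact_mod_cast Nat.pos_of_ne_zero (by omega)
    have e : ∀ k : ℕ, Real.exp (-((j:ℝ)*((k:ℝ)+1)*t)) = Real.exp (-(((k:ℝ)+1) * ((j:ℝ)*t))) :=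
      fun k => by ring_nf
    simp_rw [e]
    exact (summable_ksum m ((j:ℝ)*t) (by positivity)).mul_left _
  calc ∑ j ∈ Finset.Icc 1 n, (j:ℝ)^(s-1) *
        ∑' k : ℕ, ((k:ℝ)+1)^m * Real.exp (-((j:ℝ)*((k:ℝ)+1)*t))
      = ∑ j ∈ Finset.Icc 1 n,
        ∑' k : ℕ, (j:ℝ)^(s-1) * (((k:ℝ)+1)^m * Real.exp (-((j:ℝ)*((k:ℝ)+1)*t))) := by
        exact Finset.sum_congr rfl fun j _ => (tsum_mul_left).symm
    _ = ∑' k : ℕ, ∑ j ∈ Finset.Icc 1 n,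
        (j:ℝ)^(s-1) * (((k:ℝ)+1)^m * Real.exp (-((j:ℝ)*((k:ℝ)+1)*t))) :=
        (Summable.tsum_finsetSum hsumF).symm
    _ ≤ ∑' k : ℕ, C₀ * t^(-s) * ((k:ℝ)+1)^((m:ℝ)-s) := by
        apply Summable.tsum_le_tsum _ (summable_sum hsumF) ((summable_shift _ hp).mul_left _)
        intro k
        have hk1 : (0:ℝ) < (k:ℝ)+1 := by positivity
        have hu : 0 < ((k:ℝ)+1)*t := by positivity
        calc ∑ j ∈ Finset.Icc 1 n, (j:ℝ)^(s-1) * (((k:ℝ)+1)^m * Real.exp (-((j:ℝ)*((k:ℝ)+1)*t)))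
            = ((k:ℝ)+1)^m * ∑ j ∈ Finset.Icc 1 n, (j:ℝ)^(s-1) * Real.exp (-((j:ℝ)*(((k:ℝ)+1)*t))) := by
              rw [Finset.mul_sum]
              exact Finset.sum_congr rfl fun j _ => by ring_nf
          _ ≤ ((k:ℝ)+1)^m * (C₀ * (((k:ℝ)+1)*t)^(-s)) := by
              apply mul_le_mul_of_nonneg_left (hC₀le _ hu n) (by positivity)
          _ = C₀ * t^(-s) * ((k:ℝ)+1)^((m:ℝ)-s) := by
              rw [Real.mul_rpow hk1.le ht.le, show (m:ℝ) - s = (m:ℝ) + (-s) by ring,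
                Real.rpow_add hk1, Real.rpow_natCast]
              ring
    _ = C₀ * t^(-s) * Z := tsum_mul_left
    _ ≤ C₀ * (Z+1) * t^(-s) := by
        have h1 : (0:ℝ) < t^(-s) := Real.rpow_pos_of_pos ht _
        nlinarith

lemma Mfun_antitone (a : ℕ → ℕ) (n : ℕ) {σ₁ σ₂ : ℝ} (h1 : 0 < σ₁) (h12 : σ₁ ≤ σ₂) :
    Mfun a n σ₂ ≤ Mfun a n σ₁ := by
  unfold Mfun
  apply Finset.sum_le_sum
  intro j hj
  have hj1 : 1 ≤ j := (Finset.mem_Icc.1 hj).1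
  have hjpos : (0:ℝ) < j := by exact_mod_cast Nat.pos_of_ne_zero (by omega)
  have hx1 : Real.exp (-((j:ℝ) * σ₁)) < 1 := Real.exp_lt_one_iff.2 (by nlinarith)
  have hx2 : Real.exp (-((j:ℝ) * σ₂)) < 1 := Real.exp_lt_one_iff.2 (by nlinarith)
  have hle : Real.exp (-((j:ℝ) * σ₂)) ≤ Real.exp (-((j:ℝ) * σ₁)) := by
    apply Real.exp_le_exp.2; nlinarith
  rw [mul_div_assoc, mul_div_assoc]
  apply mul_le_mul_of_nonneg_left _ (by positivity)
  rw [div_le_div_iff₀ (by linarith) (by linarith)]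
  nlinarith [(Real.exp_pos (-((j:ℝ) * σ₂))).le, (Real.exp_pos (-((j:ℝ) * σ₁))).le]

lemma Mfun_upper (a : ℕ → ℕ) (r y D₂ : ℝ) (hy : 1 ≤ y) (hD₂ : 0 ≤ D₂)
    (hub : ∀ j : ℕ, 1 ≤ j → (a j : ℝ) ≤ D₂ * (j:ℝ)^(r-1) * y^j)
    (t : ℝ) (ht : 0 < t) (n : ℕ) :
    Mfun a n (Real.log y + t) ≤ D₂ * ∑ j ∈ Finset.Icc 1 n, (j:ℝ)^(r+1-1) *
      ∑' k : ℕ, ((k:ℝ)+1)^0 * Real.exp (-((j:ℝ)*((k:ℝ)+1)*t)) := by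
  have hy0 : (0:ℝ) < y := by linarith
  have hly : 0 ≤ Real.log y := Real.log_nonneg hy
  rw [Finset.mul_sum]
  apply Finset.sum_le_sum
  intro j hj
  have hj1 : 1 ≤ j := (Finset.mem_Icc.1 hj).1
  have hjpos : (0:ℝ) < j := by exact_mod_cast Nat.pos_of_ne_zero (by omega)
  set σ' := Real.log y + t with hσ'
  set E := Real.exp (-((j:ℝ) * σ')) with hE
  set F := Real.exp (-((j:ℝ) * t)) with hF
  have hE0 : 0 < E := Real.exp_pos _
  have hF0 : 0 < F := Real.exp_pos _
  have hF1 : F < 1 := Real.exp_lt_one_iff.2 (by nlinarith)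
  have hEF : E ≤ F := Real.exp_le_exp.2 (by nlinarith)
  have hE1 : E < 1 := lt_of_le_of_lt hEF hF1
  have hyjE : y^j * E = F := by
    have : y^j = Real.exp ((j:ℝ) * Real.log y) := by
      rw [Real.exp_nat_mul, Real.exp_log hy0]
    rw [this, hE, hF, ← Real.exp_add]
    congr 1
    rw [hσ']; ring
  have htsum : ∑' k : ℕ, ((k:ℝ)+1)^0 * Real.exp (-((j:ℝ)*((k:ℝ)+1)*t)) = F / (1-F) := by
    rw [← tsum_shift_geom F hF0.le hF1]
    apply tsum_congr
    intro k
    rw [pow_zero, one_mul, hF, ← Real.exp_nat_mul]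
    congr 1
    push_cast
    ring
  rw [htsum]
  have hjr : (j:ℝ)^(r+1-1) = (j:ℝ) * (j:ℝ)^(r-1) := by
    rw [show r+1-1 = 1+(r-1) by ring, Real.rpow_add hjpos, Real.rpow_one]
  rw [hjr]
  have step1 : (j:ℝ) * (a j) * E / (1-E) ≤ (j:ℝ) * (D₂ * (j:ℝ)^(r-1) * y^j) * E / (1-E) := by
    apply div_le_div_of_nonneg_right ?_ (by linarith)  -- careful name
    apply mul_le_mul_of_nonneg_right _ hE0.le
    exact mul_le_mul_of_nonneg_left (hub j hj1) hjpos.le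
  calc (j:ℝ) * (a j) * E / (1-E)
      ≤ (j:ℝ) * (D₂ * (j:ℝ)^(r-1) * y^j) * E / (1-E) := step1
    _ = D₂ * ((j:ℝ) * (j:ℝ)^(r-1)) * (y^j * E) / (1-E) := by ring
    _ = D₂ * ((j:ℝ) * (j:ℝ)^(r-1)) * F / (1-E) := by rw [hyjE]
    _ ≤ D₂ * ((j:ℝ) * (j:ℝ)^(r-1)) * F / (1-F) := by
        apply div_le_div_of_nonneg_left ?_ (by linarith) ?_  -- nonneg numerator, denominators
        · positivity
        · linarith
    _ = D₂ * ((j:ℝ) * (j:ℝ)^(r-1) * (F/(1-F))) := by ring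

lemma Mfun_lower (a : ℕ → ℕ) (r y D₁ : ℝ) (hy : 1 ≤ y) (hD₁ : 0 ≤ D₁)
    (hlb : ∀ j : ℕ, 1 ≤ j → D₁ * (j:ℝ)^(r-1) * y^j ≤ (a j : ℝ))
    (t : ℝ) (ht : 0 < t) (n : ℕ) :
    D₁ * ∑ j ∈ Finset.Icc 1 n, (j:ℝ)^(r+1-1) * Real.exp (-((j:ℝ)*t))
      ≤ Mfun a n (Real.log y + t) := by
  have hy0 : (0:ℝ) < y := by linarith
  have hly : 0 ≤ Real.log y := Real.log_nonneg hy
  rw [Finset.mul_sum]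
  apply Finset.sum_le_sum
  intro j hj
  have hj1 : 1 ≤ j := (Finset.mem_Icc.1 hj).1
  have hjpos : (0:ℝ) < j := by exact_mod_cast Nat.pos_of_ne_zero (by omega)
  set σ' := Real.log y + t with hσ'
  set E := Real.exp (-((j:ℝ) * σ')) with hE
  have hE0 : 0 < E := Real.exp_pos _
  have hE1 : E < 1 := Real.exp_lt_one_iff.2 (by nlinarith)
  have hyjE : y^j * E = Real.exp (-((j:ℝ) * t)) := by
    have : y^j = Real.exp ((j:ℝ) * Real.log y) := by
      rw [Real.exp_nat_mul, Real.exp_log hy0]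
    rw [this, hE, ← Real.exp_add]
    congr 1
    rw [hσ']; ring
  have hjr : (j:ℝ)^(r+1-1) = (j:ℝ) * (j:ℝ)^(r-1) := by
    rw [show r+1-1 = 1+(r-1) by ring, Real.rpow_add hjpos, Real.rpow_one]
  rw [hjr]
  calc D₁ * ((j:ℝ) * (j:ℝ)^(r-1) * Real.exp (-((j:ℝ)*t)))
      = (j:ℝ) * (D₁ * (j:ℝ)^(r-1) * y^j) * E := by rw [← hyjE]; ring
    _ ≤ (j:ℝ) * (a j) * E := by
        apply mul_le_mul_of_nonneg_right _ hE0.le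
        exact mul_le_mul_of_nonneg_left (hlb j hj1) hjpos.le
    _ = (j:ℝ) * (a j) * E / 1 := by ring
    _ ≤ (j:ℝ) * (a j) * E / (1 - E) := by
        apply div_le_div_of_nonneg_left ?_ (by linarith) (by linarith)
        positivity

lemma summable_rho_k (m : ℕ) (j : ℕ) (hj : (0:ℝ) < j) (v : ℝ) (hv : 0 < v) :
    Summable (fun k : ℕ => ((k:ℝ)+1)^m * Real.exp (-((j:ℝ)*((k:ℝ)+1)*v))) := by
  have e : ∀ k : ℕ, Real.exp (-((j:ℝ)*((k:ℝ)+1)*v)) = Real.exp (-(((k:ℝ)+1)*((j:ℝ)*v))) :=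
    fun k => by ring_nf
  simp_rw [e]
  exact summable_ksum m _ (by positivity)

lemma rho_upper (a : ℕ → ℕ) (r y D₂ : ℝ) (hy : 1 ≤ y) (hD₂ : 0 ≤ D₂)
    (hub : ∀ j : ℕ, 1 ≤ j → (a j : ℝ) ≤ D₂ * (j:ℝ)^(r-1) * y^j)
    (l : ℕ) (δ : ℝ) (hδ : 0 < δ) (n : ℕ) :
    rho a l n (Real.log y + δ) ≤ D₂ * ∑ j ∈ Finset.Icc 1 n, (j:ℝ)^(r+(l:ℝ)-1) *
      ∑' k : ℕ, ((k:ℝ)+1)^(l-1) * Real.exp (-((j:ℝ)*((k:ℝ)+1)*δ)) := by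
  have hy0 : (0:ℝ) < y := by linarith
  have hly : 0 ≤ Real.log y := Real.log_nonneg hy
  set σ' := Real.log y + δ with hσ'
  have hσ'pos : 0 < σ' := by positivity
  unfold rho
  rw [Finset.mul_sum]
  apply Finset.sum_le_sum
  intro j hj
  have hj1 : 1 ≤ j := (Finset.mem_Icc.1 hj).1
  have hjpos : (0:ℝ) < j := by exact_mod_cast Nat.pos_of_ne_zero (by omega)
  have hjr : (j:ℝ)^(r+(l:ℝ)-1) = (j:ℝ)^l * (j:ℝ)^(r-1) := by
    rw [← Real.rpow_natCast (j:ℝ) l, ← Real.rpow_add hjpos,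
      show (l:ℝ)+(r-1) = r+(l:ℝ)-1 by ring]
  calc (j:ℝ)^l * (a j) * ∑' k : ℕ, ((k:ℝ)+1)^(l-1) * Real.exp (-((j:ℝ)*((k:ℝ)+1)*σ'))
      = ∑' k : ℕ, (j:ℝ)^l * (a j) * (((k:ℝ)+1)^(l-1) * Real.exp (-((j:ℝ)*((k:ℝ)+1)*σ'))) :=
        (tsum_mul_left).symm
    _ ≤ ∑' k : ℕ, D₂ * ((j:ℝ)^(r+(l:ℝ)-1) * (((k:ℝ)+1)^(l-1) * Real.exp (-((j:ℝ)*((k:ℝ)+1)*δ)))) := by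
        apply Summable.tsum_le_tsum _ ((summable_rho_k (l-1) j hjpos σ' hσ'pos).mul_left _)
          (((summable_rho_k (l-1) j hjpos δ hδ).mul_left ((j:ℝ)^(r+(l:ℝ)-1))).mul_left D₂)
        intro k
        have hk0 : (0:ℝ) ≤ (k:ℝ) := Nat.cast_nonneg k
        have hexp : y^j * Real.exp (-((j:ℝ)*((k:ℝ)+1)*σ')) ≤ Real.exp (-((j:ℝ)*((k:ℝ)+1)*δ)) := by
          have hyj : y^j = Real.exp ((j:ℝ) * Real.log y) := by
            rw [Real.exp_nat_mul, Real.exp_log hy0]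
          rw [hyj, ← Real.exp_add]
          apply Real.exp_le_exp.2
          rw [hσ']
          nlinarith [mul_nonneg (mul_nonneg hjpos.le hk0) hly]
        calc (j:ℝ)^l * (a j) * (((k:ℝ)+1)^(l-1) * Real.exp (-((j:ℝ)*((k:ℝ)+1)*σ')))
            ≤ (j:ℝ)^l * (D₂ * (j:ℝ)^(r-1) * y^j) * (((k:ℝ)+1)^(l-1) * Real.exp (-((j:ℝ)*((k:ℝ)+1)*σ'))) := by
              apply mul_le_mul_of_nonneg_right _ (by positivity)
              exact mul_le_mul_of_nonneg_left (hub j hj1) (by positivity)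
          _ = D₂ * (((j:ℝ)^l * (j:ℝ)^(r-1)) * (((k:ℝ)+1)^(l-1) *
                (y^j * Real.exp (-((j:ℝ)*((k:ℝ)+1)*σ'))))) := by ring
          _ ≤ D₂ * (((j:ℝ)^l * (j:ℝ)^(r-1)) * (((k:ℝ)+1)^(l-1) *
                Real.exp (-((j:ℝ)*((k:ℝ)+1)*δ)))) := by
              apply mul_le_mul_of_nonneg_left _ hD₂
              apply mul_le_mul_of_nonneg_left _ (by positivity)
              exact mul_le_mul_of_nonneg_left hexp (by positivity)
          _ = D₂ * ((j:ℝ)^(r+(l:ℝ)-1) * (((k:ℝ)+1)^(l-1) * Real.exp (-((j:ℝ)*((k:ℝ)+1)*δ)))) := by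
              rw [hjr]
    _ = D₂ * ((j:ℝ)^(r+(l:ℝ)-1) * ∑' k : ℕ, ((k:ℝ)+1)^(l-1) * Real.exp (-((j:ℝ)*((k:ℝ)+1)*δ))) := by
        rw [tsum_mul_left, tsum_mul_left]

lemma rho_lower (a : ℕ → ℕ) (r y D₁ : ℝ) (hy : 1 ≤ y) (hD₁ : 0 ≤ D₁)
    (hlb : ∀ j : ℕ, 1 ≤ j → D₁ * (j:ℝ)^(r-1) * y^j ≤ (a j : ℝ))
    (l : ℕ) (δ : ℝ) (hδ : 0 < δ) (n : ℕ) :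
    D₁ * ∑ j ∈ Finset.Icc 1 n, (j:ℝ)^(r+(l:ℝ)-1) * Real.exp (-((j:ℝ)*δ))
      ≤ rho a l n (Real.log y + δ) := by
  have hy0 : (0:ℝ) < y := by linarith
  have hly : 0 ≤ Real.log y := Real.log_nonneg hy
  set σ' := Real.log y + δ with hσ'
  have hσ'pos : 0 < σ' := by positivity
  unfold rho
  rw [Finset.mul_sum]
  apply Finset.sum_le_sum
  intro j hj
  have hj1 : 1 ≤ j := (Finset.mem_Icc.1 hj).1
  have hjpos : (0:ℝ) < j := by exact_mod_cast Nat.pos_of_ne_zero (by omega)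
  have hjr : (j:ℝ)^(r+(l:ℝ)-1) = (j:ℝ)^l * (j:ℝ)^(r-1) := by
    rw [← Real.rpow_natCast (j:ℝ) l, ← Real.rpow_add hjpos,
      show (l:ℝ)+(r-1) = r+(l:ℝ)-1 by ring]
  have hfirst : Real.exp (-((j:ℝ)*σ')) ≤
      ∑' k : ℕ, ((k:ℝ)+1)^(l-1) * Real.exp (-((j:ℝ)*((k:ℝ)+1)*σ')) := by
    have h0 : ((0:ℕ):ℝ) + 1 = 1 := by norm_num
    have := Summable.le_tsum (summable_rho_k (l-1) j hjpos σ' hσ'pos) 0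
      (fun k _ => by positivity)
    simpa using this
  have hyjE : y^j * Real.exp (-((j:ℝ)*σ')) = Real.exp (-((j:ℝ)*δ)) := by
    have hyj : y^j = Real.exp ((j:ℝ) * Real.log y) := by
      rw [Real.exp_nat_mul, Real.exp_log hy0]
    rw [hyj, ← Real.exp_add]
    congr 1
    rw [hσ']; ring
  calc D₁ * ((j:ℝ)^(r+(l:ℝ)-1) * Real.exp (-((j:ℝ)*δ)))
      = (j:ℝ)^l * (D₁ * (j:ℝ)^(r-1) * y^j) * Real.exp (-((j:ℝ)*σ')) := by
        rw [← hyjE, hjr]; ring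
    _ ≤ (j:ℝ)^l * (a j) * Real.exp (-((j:ℝ)*σ')) := by
        apply mul_le_mul_of_nonneg_right _ (Real.exp_pos _).le
        exact mul_le_mul_of_nonneg_left (hlb j hj1) (by positivity)
    _ ≤ (j:ℝ)^l * (a j) * ∑' k : ℕ, ((k:ℝ)+1)^(l-1) * Real.exp (-((j:ℝ)*((k:ℝ)+1)*σ')) := by
        apply mul_le_mul_of_nonneg_left hfirst (by positivity)

/-- under condition (exp), for every fixed integer `l ≥ 3`,
`ρ_l(n) ≍ n^{(r+l)/(r+1)}`. -/
theorem rho_asymptotics (a : ℕ → ℕ) (r y : ℝ) (hr : 0 < r) (hy : 1 ≤ y)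
    (hexp : ExpansiveCond a r y)
    (σ : ℕ → ℝ) (hσ : ∀ n : ℕ, 1 ≤ n → 0 < σ n ∧ Mfun a n (σ n) = n)
    (l : ℕ) (hl : 3 ≤ l) :
    ∃ C₁ C₂ : ℝ, 0 < C₁ ∧ 0 < C₂ ∧ ∃ N : ℕ, ∀ n ≥ N,
      C₁ * (n : ℝ) ^ ((r + l) / (r + 1)) ≤ rho a l n (σ n) ∧
      rho a l n (σ n) ≤ C₂ * (n : ℝ) ^ ((r + l) / (r + 1)) := by
  obtain ⟨D₁, D₂, hD₁, hD₂, hD⟩ := hexp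
  have hub : ∀ j : ℕ, 1 ≤ j → (a j : ℝ) ≤ D₂ * (j:ℝ)^(r-1) * y^j := fun j hj => (hD j hj).2
  have hlb : ∀ j : ℕ, 1 ≤ j → D₁ * (j:ℝ)^(r-1) * y^j ≤ (a j : ℝ) := fun j hj => (hD j hj).1
  have hy0 : (0:ℝ) < y := by linarith
  have hly : 0 ≤ Real.log y := Real.log_nonneg hy
  have hr1 : (0:ℝ) < r + 1 := by linarith
  have hl3 : (3:ℝ) ≤ (l:ℝ) := by exact_mod_cast hl
  obtain ⟨CM, hCM, hCMle⟩ := double_sum_le 0 (r+1) (by linarith) (by push_cast; linarith)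
  obtain ⟨cM, hcM, hcMle⟩ := sum_rpow_exp_ge (r+1) (by linarith)
  have hs1 : (1:ℝ) ≤ r + (l:ℝ) := by linarith
  have hml : ((l-1 : ℕ):ℝ) + 1 < r + (l:ℝ) := by
    have h1 : (1:ℕ) ≤ l := by omega
    have : ((l-1:ℕ):ℝ) = (l:ℝ) - 1 := by push_cast [h1]; ring
    rw [this]; linarith
  obtain ⟨Cρ, hCρ, hCρle⟩ := double_sum_le (l-1) (r + (l:ℝ)) hs1 hml
  obtain ⟨cρ, hcρ, hcρle⟩ := sum_rpow_exp_ge (r + (l:ℝ)) hs1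
  set K := D₂ * CM with hK
  have hKpos : 0 < K := by positivity
  set c₂ := (2*K) ^ ((r+1)⁻¹) with hc₂def
  have hc₂pos : 0 < c₂ := Real.rpow_pos_of_pos (by linarith) _
  set K' := D₁ * cM with hK'
  have hK'pos : 0 < K' := by positivity
  set c₁ := (K'/2) ^ ((r+1)⁻¹) with hc₁def
  have hc₁pos : 0 < c₁ := Real.rpow_pos_of_pos (by positivity) _
  set ν : ℕ → ℝ := fun n => (n:ℝ) ^ (-(r+1)⁻¹) with hνdef
  -- eventual conditions
  have hνt : Tendsto ν atTop (nhds 0) := by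
    exact (tendsto_rpow_neg_atTop (by positivity)).comp tendsto_natCast_atTop_atTop
  have hev2 : ∀ᶠ n : ℕ in atTop, c₂ * ν n < 1/4 := by
    have h := hνt.const_mul c₂
    rw [mul_zero] at h
    exact h.eventually_lt_const (by norm_num)
  have hev2' : ∀ᶠ n : ℕ in atTop, c₁ * ν n < 1/4 := by
    have h := hνt.const_mul c₁
    rw [mul_zero] at h
    exact h.eventually_lt_const (by norm_num)
  have hev3 : ∀ᶠ n : ℕ in atTop, 1 ≤ c₁ * ((n:ℝ) ^ ((1:ℝ)-(r+1)⁻¹)) := by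
    have hpos : (0:ℝ) < 1 - (r+1)⁻¹ := by
      have : (r+1)⁻¹ < 1 := by
        rw [inv_lt_one_iff₀]; right; linarith
      linarith
    have h1 : Tendsto (fun x : ℝ => x ^ ((1:ℝ)-(r+1)⁻¹)) atTop atTop :=
      tendsto_rpow_atTop hpos
    have h2 : Tendsto (fun n : ℕ => (n:ℝ) ^ ((1:ℝ)-(r+1)⁻¹)) atTop atTop :=
      h1.comp tendsto_natCast_atTop_atTop
    have h3 := h2.const_mul_atTop hc₁pos
    exact h3.eventually_ge_atTop 1
  obtain ⟨N, hN⟩ := eventually_atTop.mp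
    ((eventually_ge_atTop 1).and (hev2.and (hev2'.and hev3)))
  refine ⟨D₁ * cρ * c₂ ^ (-(r + (l:ℝ))), D₂ * Cρ * c₁ ^ (-(r + (l:ℝ))),
    by positivity, by positivity, N, fun n hn => ?_⟩
  obtain ⟨hn1, hc2q, hc1q, hc3⟩ := hN n hn
  have hnR : (1:ℝ) ≤ (n:ℝ) := by exact_mod_cast hn1
  have hnpos : (0:ℝ) < n := by linarith
  have hνpos : 0 < ν n := Real.rpow_pos_of_pos hnpos _
  obtain ⟨hσpos, hσeq⟩ := hσ n hn1
  -- key rpow identities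
  have idν : (ν n) ^ (-(r+1)) = (n:ℝ) := by
    show ((n:ℝ) ^ (-(r+1)⁻¹)) ^ (-(r+1)) = (n:ℝ)
    rw [← Real.rpow_mul hnpos.le]
    have h : (-(r+1)⁻¹) * (-(r+1)) = 1 := by field_simp
    rw [h, Real.rpow_one]
  have idν2 : (ν n) ^ (-(r+(l:ℝ))) = (n:ℝ) ^ ((r + (l:ℝ)) / (r + 1)) := by
    show ((n:ℝ) ^ (-(r+1)⁻¹)) ^ (-(r+(l:ℝ))) = (n:ℝ) ^ ((r + (l:ℝ)) / (r + 1))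
    rw [← Real.rpow_mul hnpos.le]
    congr 1
    rw [div_eq_mul_inv]
    ring
  have idc₂ : c₂ ^ (-(r+1)) = (2*K)⁻¹ := by
    rw [hc₂def, ← Real.rpow_mul (by linarith : (0:ℝ) ≤ 2*K)]
    have h : (r+1)⁻¹ * (-(r+1)) = -1 := by field_simp
    rw [h, Real.rpow_neg_one]
  have idc₁ : c₁ ^ (-(r+1)) = 2 / K' := by
    rw [hc₁def, ← Real.rpow_mul (by positivity : (0:ℝ) ≤ K'/2)]
    have h : (r+1)⁻¹ * (-(r+1)) = -1 := by field_simp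
    rw [h, Real.rpow_neg_one]
    rw [inv_div]
  -- positivity of the window endpoints
  have ht₂pos : 0 < c₂ * ν n := by positivity
  have ht₁pos : 0 < c₁ * ν n := by positivity
  -- condition (iii) in usable form
  have hc3' : 1 / (c₁ * ν n) ≤ (n:ℝ) := by
    have hmul : (n:ℝ) ^ ((1:ℝ)-(r+1)⁻¹) = (n:ℝ) * ν n := by
      show (n:ℝ) ^ ((1:ℝ)-(r+1)⁻¹) = (n:ℝ) * ((n:ℝ) ^ (-(r+1)⁻¹))
      rw [show (1:ℝ)-(r+1)⁻¹ = 1 + (-(r+1)⁻¹) by ring, Real.rpow_add hnpos, Real.rpow_one]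
    rw [hmul] at hc3
    rw [div_le_iff₀ ht₁pos]
    nlinarith
  -- upper bound on δ := σ n - log y
  have hMup : Mfun a n (Real.log y + c₂ * ν n) ≤ (n:ℝ)/2 := by
    calc Mfun a n (Real.log y + c₂ * ν n)
        ≤ D₂ * ∑ j ∈ Finset.Icc 1 n, (j:ℝ)^(r+1-1) *
            ∑' k : ℕ, ((k:ℝ)+1)^0 * Real.exp (-((j:ℝ)*((k:ℝ)+1)*(c₂ * ν n))) :=
          Mfun_upper a r y D₂ hy hD₂.le hub _ ht₂pos n
      _ ≤ D₂ * (CM * (c₂ * ν n) ^ (-(r+1))) :=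
          mul_le_mul_of_nonneg_left (hCMle _ ht₂pos n) hD₂.le
      _ = (n:ℝ)/2 := by
          rw [Real.mul_rpow hc₂pos.le hνpos.le, idc₂, idν]
          rw [hK]
          field_simp
          try ring
  have hδub : σ n - Real.log y ≤ c₂ * ν n := by
    by_contra hcon
    push_neg at hcon
    have h1 : Real.log y + c₂ * ν n ≤ σ n := by linarith
    have h2 := Mfun_antitone a n (by positivity : 0 < Real.log y + c₂ * ν n) h1
    rw [hσeq] at h2
    have := h2.trans hMup
    linarith
  -- lower bound on δ
  have ht₁4 : c₁ * ν n ≤ 1/4 := le_of_lt hc1q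
  have hMlo : 2 * (n:ℝ) ≤ Mfun a n (Real.log y + c₁ * ν n) := by
    calc 2 * (n:ℝ)
        = K' * ((c₁ * ν n) ^ (-(r+1))) := by
          rw [Real.mul_rpow hc₁pos.le hνpos.le, idc₁, idν]
          field_simp
          try ring
      _ = D₁ * (cM * (c₁ * ν n) ^ (-(r+1))) := by rw [hK']; ring
      _ ≤ D₁ * ∑ j ∈ Finset.Icc 1 n, (j:ℝ)^(r+1-1) * Real.exp (-((j:ℝ)*(c₁ * ν n))) :=
          mul_le_mul_of_nonneg_left (hcMle _ ht₁pos ht₁4 n hc3') hD₁.le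
      _ ≤ Mfun a n (Real.log y + c₁ * ν n) :=
          Mfun_lower a r y D₁ hy hD₁.le hlb _ ht₁pos n
  have hδlb : c₁ * ν n ≤ σ n - Real.log y := by
    by_contra hcon
    push_neg at hcon
    have h1 : σ n ≤ Real.log y + c₁ * ν n := by linarith
    have h2 := Mfun_antitone a n hσpos h1
    rw [hσeq] at h2
    linarith
  set δ := σ n - Real.log y with hδdef
  have hδpos : 0 < δ := lt_of_lt_of_le ht₁pos hδlb
  have hσform : σ n = Real.log y + δ := by rw [hδdef]; ring
  have hδ4 : δ ≤ 1/4 := hδub.trans (le_of_lt hc2q)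
  have hδn : 1/δ ≤ (n:ℝ) := by
    refine le_trans ?_ hc3'
    apply one_div_le_one_div_of_le ht₁pos hδlb
  constructor
  · -- lower bound for rho
    calc D₁ * cρ * c₂ ^ (-(r + (l:ℝ))) * (n:ℝ) ^ ((r + (l:ℝ)) / (r + 1))
        = D₁ * (cρ * ((c₂ * ν n) ^ (-(r+(l:ℝ))))) := by
          rw [Real.mul_rpow hc₂pos.le hνpos.le, idν2]
          ring
      _ ≤ D₁ * (cρ * δ ^ (-(r+(l:ℝ)))) := by
          apply mul_le_mul_of_nonneg_left _ hD₁.le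
          apply mul_le_mul_of_nonneg_left _ hcρ.le
          exact Real.rpow_le_rpow_of_nonpos hδpos hδub (by linarith)
      _ ≤ D₁ * ∑ j ∈ Finset.Icc 1 n, (j:ℝ)^(r+(l:ℝ)-1) * Real.exp (-((j:ℝ)*δ)) :=
          mul_le_mul_of_nonneg_left (hcρle δ hδpos hδ4 n hδn) hD₁.le
      _ ≤ rho a l n (Real.log y + δ) :=
          rho_lower a r y D₁ hy hD₁.le hlb l δ hδpos n
      _ = rho a l n (σ n) := by rw [hσform]
  · -- upper bound for rho
    calc rho a l n (σ n)
        = rho a l n (Real.log y + δ) := by rw [hσform]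
      _ ≤ D₂ * ∑ j ∈ Finset.Icc 1 n, (j:ℝ)^(r+(l:ℝ)-1) *
            ∑' k : ℕ, ((k:ℝ)+1)^(l-1) * Real.exp (-((j:ℝ)*((k:ℝ)+1)*δ)) :=
          rho_upper a r y D₂ hy hD₂.le hub l δ hδpos n
      _ ≤ D₂ * (Cρ * δ ^ (-(r+(l:ℝ)))) :=
          mul_le_mul_of_nonneg_left (hCρle δ hδpos n) hD₂.le
      _ ≤ D₂ * (Cρ * ((c₁ * ν n) ^ (-(r+(l:ℝ))))) := by
          apply mul_le_mul_of_nonneg_left _ hD₂.le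
          apply mul_le_mul_of_nonneg_left _ hCρ.le
          exact Real.rpow_le_rpow_of_nonpos ht₁pos hδlb (by linarith)
      _ = D₂ * Cρ * c₁ ^ (-(r + (l:ℝ))) * (n:ℝ) ^ ((r + (l:ℝ)) / (r + 1)) := by
          rw [Real.mul_rpow hc₁pos.le hνpos.le, idν2]
          ring
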